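/- For any density matrix ρ_A on H_A with C_r(ρ_A) measured in basis {|a_j⟩}, and any incoherent state σ_B = Σ_i c_i |b_i⟩⟨b_i| on H_B (diagonal in {|b_i⟩}), the relative entropy of coherence in the product basis satisfies C_r(ρ_A ⊗ σ_B) = C_r(ρ_A). -/

import Mathlib

open Matrix
open scoped ComplexOrder

variable {n : Type*} [Fintype n] [DecidableEq n]

/-- The trace norm (sum of singular values) of a complex square matrix. -/
noncomputable def traceNorm (A : Matrix n n ℂ) : ℝ :=
  (((posSemidef_conjTranspose_mul_self A).1.eigenvectorUnitary.1 *
      diagonal (((↑) : ℝ → ℂ) ∘ Real.sqrt ∘ (posSemidef_conjTranspose_mul_self A).1.eigenvalues) *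
      (star (posSemidef_conjTranspose_mul_self A).1.eigenvectorUnitary : Matrix n n ℂ)).trace).re

/-- `A` is a density matrix: positive semidefinite with unit trace. -/
def IsDensityMatrix (A : Matrix n n ℂ) : Prop := A.PosSemidef ∧ A.trace = 1

/-- `A` is incoherent (diagonal) in the fixed basis. -/
def Incoherent (A : Matrix n n ℂ) : Prop := ∀ i j, i ≠ j → A i j = 0

/-- The dephasing map, removing all off-diagonal entries. -/
def dephase (A : Matrix n n ℂ) : Matrix n n ℂ := Matrix.diagonal (fun i => A i i)

/-- The `l₁`-norm of coherence: sum of moduli of off-diagonal entries. -/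
noncomputable def Cl1 (A : Matrix n n ℂ) : ℝ :=
  ∑ i, ∑ j, if i ≠ j then ‖A i j‖ else 0

/-- The von Neumann entropy `-Tr ρ log ρ` of a Hermitian matrix, via its eigenvalues
(junk value `0` on non-Hermitian matrices). -/
noncomputable def vnEntropy (A : Matrix n n ℂ) : ℝ :=
  if h : A.IsHermitian then -∑ i, h.eigenvalues i * Real.log (h.eigenvalues i) else 0

/-- The relative entropy of coherence `C_r(ρ) = S(Δ(ρ)) - S(ρ)`. -/
noncomputable def Crel (A : Matrix n n ℂ) : ℝ := vnEntropy (dephase A) - vnEntropy A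

section Aux
open Polynomial

variable {N : Type*} [Fintype N] [DecidableEq N]

lemma charpoly_conj_eq (P Q A : Matrix N N ℂ) (h : P * Q = 1) :
    (P * A * Q).charpoly = A.charpoly := by
  have hm : ((C : ℂ →+* ℂ[X]).mapMatrix P) * ((C : ℂ →+* ℂ[X]).mapMatrix Q) = 1 := by
    rw [← _root_.map_mul, h, _root_.map_one]
  have hsc : ∀ M : Matrix N N ℂ[X], Commute (scalar N X) M :=
    fun M => scalar_commute X (fun r' => Commute.all _ _) M
  have hcm : charmatrix (P * A * Q) =
      ((C : ℂ →+* ℂ[X]).mapMatrix P) * charmatrix A * ((C : ℂ →+* ℂ[X]).mapMatrix Q) := by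
    rw [charmatrix, charmatrix, mul_sub, sub_mul]
    congr 1
    · rw [← (hsc (C.mapMatrix P)).eq, mul_assoc, hm, mul_one]
    · rw [← _root_.map_mul, ← _root_.map_mul]
  have hdet : (C.mapMatrix P).det * (C.mapMatrix Q).det = 1 := by
    rw [← det_mul, hm, det_one]
  rw [Matrix.charpoly, Matrix.charpoly, hcm, det_mul, det_mul]
  calc (C.mapMatrix P).det * (charmatrix A).det * (C.mapMatrix Q).det
      = (C.mapMatrix P).det * (C.mapMatrix Q).det * (charmatrix A).det := by ring
    _ = (charmatrix A).det := by rw [hdet, one_mul]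

lemma charmatrix_diagonal (d : N → ℂ) :
    charmatrix (Matrix.diagonal d) = Matrix.diagonal (fun i => (X : ℂ[X]) - C (d i)) := by
  ext i j
  by_cases h : i = j
  · subst h; simp
  · rw [charmatrix_apply_ne _ _ _ h, diagonal_apply_ne _ h, diagonal_apply_ne _ h, map_zero,
      neg_zero]

lemma charpoly_diagonal' (d : N → ℂ) :
    (Matrix.diagonal d).charpoly = ∏ i, ((X : ℂ[X]) - C (d i)) := by
  rw [Matrix.charpoly, _root_.charmatrix_diagonal, det_diagonal]

lemma roots_charpoly_diagonal (d : N → ℂ) :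
    (Matrix.diagonal d).charpoly.roots = Finset.univ.val.map d := by
  rw [charpoly_diagonal']
  have : ∏ i, ((X : ℂ[X]) - C (d i)) = ((Finset.univ.val.map d).map (fun a => X - C a)).prod := by
    rw [Multiset.map_map]; rfl
  rw [this, roots_multiset_prod_X_sub_C]

/-- Entropy-type functional on the roots of the characteristic polynomial. -/
noncomputable def entRoots (A : Matrix N N ℂ) : ℝ :=
  -((A.charpoly.roots).map (fun z : ℂ => z.re * Real.log z.re)).sum

lemma entRoots_diagonal (d : N → ℂ) :
    entRoots (Matrix.diagonal d) = -∑ i, (d i).re * Real.log (d i).re := by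
  rw [entRoots, roots_charpoly_diagonal, Multiset.map_map]
  rfl

lemma vnEntropy_eq_entRoots {A : Matrix N N ℂ} (h : A.IsHermitian) :
    vnEntropy A = entRoots A := by
  rw [vnEntropy, dif_pos h]
  have hs := h.spectral_theorem
  have hu : (h.eigenvectorUnitary : Matrix N N ℂ) * (star (h.eigenvectorUnitary : Matrix N N ℂ)) = 1 :=
    Matrix.mem_unitaryGroup_iff.mp h.eigenvectorUnitary.2
  have hcp : A.charpoly = (Matrix.diagonal (RCLike.ofReal ∘ h.eigenvalues : N → ℂ)).charpoly := by
    conv_lhs => rw [hs]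
    exact charpoly_conj_eq _ _ _ hu
  have he : entRoots A = entRoots (Matrix.diagonal (RCLike.ofReal ∘ h.eigenvalues : N → ℂ)) := by
    rw [entRoots, entRoots, hcp]
  rw [he, entRoots_diagonal]
  simp

lemma sum_eigenvalues_eq_trace {A : Matrix N N ℂ} (h : A.IsHermitian) :
    (∑ i, h.eigenvalues i) = A.trace.re := by
  have hu : star (h.eigenvectorUnitary : Matrix N N ℂ) * (h.eigenvectorUnitary : Matrix N N ℂ) = 1 :=
    Matrix.mem_unitaryGroup_iff'.mp h.eigenvectorUnitary.2
  have ht : A.trace = ∑ i, (h.eigenvalues i : ℂ) := by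
    conv_lhs => rw [h.spectral_theorem]
    rw [Unitary.conjStarAlgAut_apply, Matrix.trace_mul_comm, ← mul_assoc, hu, one_mul, trace_diagonal]
    rfl
  rw [ht]
  simp

lemma entropy_prod_sum {ι κ : Type*} [Fintype ι] [Fintype κ] (p : ι → ℝ) (q : κ → ℝ)
    (hp0 : ∀ i, 0 ≤ p i) (hq0 : ∀ k, 0 ≤ q k) (hp1 : ∑ i, p i = 1) (hq1 : ∑ k, q k = 1) :
    ∑ i, ∑ k, (p i * q k) * Real.log (p i * q k)
      = (∑ i, p i * Real.log (p i)) + ∑ k, q k * Real.log (q k) := by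
  have key : ∀ i k, (p i * q k) * Real.log (p i * q k)
      = q k * (p i * Real.log (p i)) + p i * (q k * Real.log (q k)) := by
    intro i k
    rcases eq_or_ne (p i) 0 with h | h
    · simp [h]
    rcases eq_or_ne (q k) 0 with h2 | h2
    · simp [h2]
    rw [Real.log_mul h h2]; ring
  have hrow : ∀ i, ∑ k, ((p i * q k) * Real.log (p i * q k))
      = p i * Real.log (p i) + p i * ∑ k, q k * Real.log (q k) := by
    intro i
    simp_rw [key i]
    rw [Finset.sum_add_distrib, ← Finset.sum_mul, hq1, one_mul, ← Finset.mul_sum]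
  simp_rw [hrow]
  rw [Finset.sum_add_distrib, ← Finset.sum_mul, hp1, one_mul]

end Aux

open Kronecker in
/-- Tensoring with a classical (incoherent, diagonal) ancilla does not change the relative
entropy of coherence: `C_r(ρ_A ⊗ σ_B) = C_r(ρ_A)`. -/
theorem Crel_tensor_classical_ancilla {a m : ℕ} (ρ : Matrix (Fin a) (Fin a) ℂ)
    (hρ : IsDensityMatrix ρ) (c : Fin m → ℝ) (hc0 : ∀ i, 0 ≤ c i) (hc1 : ∑ i, c i = 1) :
    Crel (ρ ⊗ₖ Matrix.diagonal (fun i => (c i : ℂ))) = Crel ρ := by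
  obtain ⟨hpsd, htr⟩ := hρ
  have hH : ρ.IsHermitian := hpsd.1
  set D : Matrix (Fin m) (Fin m) ℂ := Matrix.diagonal (fun i => (c i : ℂ)) with hD
  -- facts about eigenvalues
  set lam : Fin a → ℝ := hH.eigenvalues with hlam
  have hlam0 : ∀ i, 0 ≤ lam i := hpsd.eigenvalues_nonneg
  have hlam1 : ∑ i, lam i = 1 := by
    rw [hlam, sum_eigenvalues_eq_trace hH, htr]; simp
  -- facts about diagonal of ρ
  set r : Fin a → ℝ := fun i => (ρ i i).re with hr
  have hdiagsa : ∀ i, star (ρ i i) = ρ i i := by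
    intro i
    conv_rhs => rw [← hH]
    rfl
  have hdiagre : ∀ i, (ρ i i : ℂ) = (r i : ℂ) := by
    intro i
    have h1 := hdiagsa i
    have him : (ρ i i).im = 0 := by
      have h2 := congrArg Complex.im h1
      simp only [Complex.star_def, Complex.conj_im] at h2
      linarith
    exact Complex.ext (by simp [hr]) (by simp [him])
  have hr0 : ∀ i, 0 ≤ r i := by
    intro i
    have h0 : (0 : ℂ) ≤ ρ i i := hpsd.diag_nonneg
    rw [Complex.le_def] at h0
    exact h0.1
  have hr1 : ∑ i, r i = 1 := by
    have h1 : ρ.trace = ∑ i, ρ i i := rfl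
    have h2 := congrArg Complex.re (h1.symm.trans htr)
    rw [Complex.re_sum] at h2
    simpa [hr] using h2
  -- Hermitian facts
  have hDH : D.IsHermitian := by
    rw [hD]
    exact Matrix.isHermitian_diagonal_iff.mpr (fun i => by simp [_root_.IsSelfAdjoint])
  have hkH : (ρ ⊗ₖ D).IsHermitian := by
    rw [Matrix.IsHermitian]
    ext ⟨i, k⟩ ⟨j, l⟩
    rw [Matrix.conjTranspose_apply, Matrix.kroneckerMap_apply, Matrix.kroneckerMap_apply,
      star_mul', ← Matrix.conjTranspose_apply ρ, ← Matrix.conjTranspose_apply D, hH.eq, hDH.eq]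
  have hdeph : dephase (ρ ⊗ₖ D)
      = Matrix.diagonal (fun ik : Fin a × Fin m => (ρ ik.1 ik.1) * (c ik.2 : ℂ)) := by
    have hfun : (fun ik : Fin a × Fin m => (ρ ⊗ₖ D) ik ik)
        = fun ik => (ρ ik.1 ik.1) * (c ik.2 : ℂ) := by
      funext ik
      simp [Matrix.kroneckerMap_apply, hD]
    rw [dephase, hfun]
  have hdephH : (Matrix.diagonal
      (fun ik : Fin a × Fin m => (ρ ik.1 ik.1) * (c ik.2 : ℂ))).IsHermitian :=
    Matrix.isHermitian_diagonal_iff.mpr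
      (fun ik => show star _ = _ by
        rw [star_mul', hdiagsa]
        simp)
  -- unitary facts
  set U : Matrix (Fin a) (Fin a) ℂ := (hH.eigenvectorUnitary : Matrix (Fin a) (Fin a) ℂ) with hU
  have hu : U * star U = 1 := Matrix.mem_unitaryGroup_iff.mp hH.eigenvectorUnitary.2
  have hu2 : (U ⊗ₖ (1 : Matrix (Fin m) (Fin m) ℂ))
      * ((star U) ⊗ₖ (1 : Matrix (Fin m) (Fin m) ℂ)) = 1 := by
    rw [← Matrix.mul_kronecker_mul, hu, mul_one, Matrix.one_kronecker_one]
  set dl : Fin a → ℂ := RCLike.ofReal ∘ hH.eigenvalues with hdl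
  have hconj : ρ ⊗ₖ D
      = (U ⊗ₖ (1 : Matrix (Fin m) (Fin m) ℂ))
        * ((Matrix.diagonal dl) ⊗ₖ D)
        * ((star U) ⊗ₖ (1 : Matrix (Fin m) (Fin m) ℂ)) := by
    rw [← Matrix.mul_kronecker_mul, ← Matrix.mul_kronecker_mul, one_mul, mul_one, hdl, hU,
      ← Unitary.conjStarAlgAut_apply (S := ℂ) hH.eigenvectorUnitary, ← hH.spectral_theorem]
  have hdiagM : (Matrix.diagonal dl) ⊗ₖ D
      = Matrix.diagonal (fun ik : Fin a × Fin m => dl ik.1 * (c ik.2 : ℂ)) := by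
    rw [hD]
    exact Matrix.diagonal_kronecker_diagonal dl _
  -- entropy computations
  have S1 : vnEntropy (ρ ⊗ₖ D) = -∑ i, ∑ k, (lam i * c k) * Real.log (lam i * c k) := by
    rw [vnEntropy_eq_entRoots hkH]
    have hcp : (ρ ⊗ₖ D).charpoly
        = (Matrix.diagonal (fun ik : Fin a × Fin m => dl ik.1 * (c ik.2 : ℂ))).charpoly := by
      conv_lhs => rw [hconj]
      rw [← hdiagM]
      exact charpoly_conj_eq _ _ _ hu2
    rw [entRoots, hcp, ← entRoots, entRoots_diagonal, Fintype.sum_prod_type]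
    congr 1
    apply Finset.sum_congr rfl
    intro i _
    apply Finset.sum_congr rfl
    intro k _
    have : dl i * (c k : ℂ) = ((lam i * c k : ℝ) : ℂ) := by
      rw [hdl]
      push_cast
      rfl
    rw [this, Complex.ofReal_re]
  have S2 : vnEntropy (dephase (ρ ⊗ₖ D)) = -∑ i, ∑ k, (r i * c k) * Real.log (r i * c k) := by
    rw [hdeph, vnEntropy_eq_entRoots hdephH, entRoots_diagonal, Fintype.sum_prod_type]
    congr 1
    apply Finset.sum_congr rfl
    intro i _
    apply Finset.sum_congr rfl
    intro k _
    rw [hdiagre, ← Complex.ofReal_mul, Complex.ofReal_re]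
  have S3 : vnEntropy ρ = -∑ i, lam i * Real.log (lam i) := by
    rw [vnEntropy, dif_pos hH]
  have hdephρH : (Matrix.diagonal (fun i : Fin a => ρ i i)).IsHermitian :=
    Matrix.isHermitian_diagonal_iff.mpr (fun i => hdiagsa i)
  have S4 : vnEntropy (dephase ρ) = -∑ i, r i * Real.log (r i) := by
    rw [dephase, vnEntropy_eq_entRoots hdephρH, entRoots_diagonal]
  rw [Crel, Crel, S1, S2, S3, S4,
    entropy_prod_sum lam c hlam0 hc0 hlam1 hc1, entropy_prod_sum r c hr0 hc0 hr1 hc1]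
  ring
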